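/- The number of roots in the triple root system R(Fₙ) equals n² + 55n + 126. -/
import Mathlib


open Finset

/-- Vertices of the triple diagram `Fₙ`: the central weight-3 vertex `E₀ = none`,
the chain `E₁,…,E_n` (`Sum.inl i ↦ E_{i+1}`) and the `E₆`-part `F₁,…,F₆`
(`Sum.inr i ↦ F_{i+1}`). -/
abbrev FnV (n : ℕ) := Option (Fin n ⊕ Fin 6)

/-- Adjacency of `Fₙ`: `E₀—E₁`, `E_i—E_{i+1}`, `E₀—F₁`, the chain `F₁—F₂—F₃—F₄—F₅`
and `F₆—F₃` (an `E₆` diagram attached to `E₀` along the end vertex `F₁` of its long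
arm; for `n = 0` the underlying diagram is `E₇`). -/
def FnAdj (n : ℕ) : FnV n → FnV n → Bool
  | none, some (Sum.inl i) => decide (i.val = 0)
  | some (Sum.inl i), none => decide (i.val = 0)
  | none, some (Sum.inr i) => decide (i.val = 0)
  | some (Sum.inr i), none => decide (i.val = 0)
  | some (Sum.inl i), some (Sum.inl j) => decide (i.val + 1 = j.val ∨ j.val + 1 = i.val)
  | some (Sum.inr i), some (Sum.inr j) =>
      decide ((i.val + 1 = j.val ∧ j.val ≤ 4) ∨ (j.val + 1 = i.val ∧ i.val ≤ 4) ∨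
        (i.val = 5 ∧ j.val = 2) ∨ (j.val = 5 ∧ i.val = 2))
  | _, _ => false

def FnM (n : ℕ) (x y : FnV n) : ℤ :=
  if x = y then (if x = none then -3 else -2)
  else if FnAdj n x y then 1 else 0

def FnQ (n : ℕ) (Y : FnV n → ℤ) : ℤ :=
  ∑ x, ∑ y, Y x * FnM n x y * Y y

set_option linter.unreachableTactic false
set_option linter.unusedTactic false


/-- E₆ quadratic form (× standard normalization): vertices `0—1—2—3—4`, `2—5`. -/
def qE6 (f : Fin 6 → ℤ) : ℤ :=
  2*((f 0)^2 + (f 1)^2 + (f 2)^2 + (f 3)^2 + (f 4)^2 + (f 5)^2)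
  - 2*(f 0 * f 1 + f 1 * f 2 + f 2 * f 3 + f 3 * f 4 + f 2 * f 5)

lemma qE6_nonneg (f : Fin 6 → ℤ) : 0 ≤ qE6 f := by
  unfold qE6
  nlinarith [sq_nonneg (2*f 0 - f 1), sq_nonneg (3*f 1 - 2*f 2),
    sq_nonneg (4*f 2 - 3*f 3 - 3*f 5), sq_nonneg (5*f 3 - 4*f 4 - 3*f 5),
    sq_nonneg (2*f 4 - f 5), sq_nonneg (f 5)]

lemma qE6_b0 (f : Fin 6 → ℤ) : 3*(f 0)^2 ≤ 4 * qE6 f := by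
  unfold qE6
  nlinarith [sq_nonneg (5*f 0 - 4*f 1), sq_nonneg (6*f 1 - 5*f 2),
    sq_nonneg (7*f 2 - 6*f 3 - 6*f 5), sq_nonneg (8*f 3 - 7*f 4 - 6*f 5),
    sq_nonneg (3*f 4 - 2*f 5)]

lemma qE6_b1 (f : Fin 6 → ℤ) : 3*(f 1)^2 ≤ 10 * qE6 f := by
  unfold qE6
  nlinarith [sq_nonneg (2*f 0 - f 1), sq_nonneg (6*f 1 - 5*f 2),
    sq_nonneg (7*f 2 - 6*f 3 - 6*f 5), sq_nonneg (8*f 3 - 7*f 4 - 6*f 5),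
    sq_nonneg (3*f 4 - 2*f 5)]

lemma qE6_b2 (f : Fin 6 → ℤ) : (f 2)^2 ≤ 6 * qE6 f := by
  unfold qE6
  nlinarith [sq_nonneg (2*f 0 - f 1), sq_nonneg (3*f 1 - 2*f 2),
    sq_nonneg (7*f 2 - 6*f 3 - 6*f 5), sq_nonneg (8*f 3 - 7*f 4 - 6*f 5),
    sq_nonneg (3*f 4 - 2*f 5)]

lemma qE6_b3 (f : Fin 6 → ℤ) : 3*(f 3)^2 ≤ 10 * qE6 f := by
  unfold qE6
  nlinarith [sq_nonneg (2*f 0 - f 1), sq_nonneg (3*f 1 - 2*f 2),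
    sq_nonneg (4*f 2 - 3*f 3 - 3*f 5), sq_nonneg (19*f 3 - 20*f 4 - 15*f 5),
    sq_nonneg (6*f 4 - 5*f 5)]

lemma qE6_b4 (f : Fin 6 → ℤ) : 3*(f 4)^2 ≤ 4 * qE6 f := by
  unfold qE6
  nlinarith [sq_nonneg (2*f 0 - f 1), sq_nonneg (3*f 1 - 2*f 2),
    sq_nonneg (4*f 2 - 3*f 3 - 3*f 5), sq_nonneg (5*f 3 - 4*f 4 - 3*f 5),
    sq_nonneg (3*f 4 - 4*f 5)]

lemma qE6_b5 (f : Fin 6 → ℤ) : (f 5)^2 ≤ 2 * qE6 f := by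
  unfold qE6
  nlinarith [sq_nonneg (2*f 0 - f 1), sq_nonneg (3*f 1 - 2*f 2),
    sq_nonneg (4*f 2 - 3*f 3 - 3*f 5), sq_nonneg (5*f 3 - 4*f 4 - 3*f 5),
    sq_nonneg (2*f 4 - f 5)]

set_option maxHeartbeats 1000000 in
lemma qE6_zero {f : Fin 6 → ℤ} (h : qE6 f = 0) : f = 0 := by
  have h0 := qE6_b0 f; have h1 := qE6_b1 f; have h2 := qE6_b2 f
  have h3 := qE6_b3 f; have h4 := qE6_b4 f; have h5 := qE6_b5 f
  rw [h] at h0 h1 h2 h3 h4 h5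
  funext i
  fin_cases i <;> simp <;> nlinarith [sq_nonneg (f 0), sq_nonneg (f 1), sq_nonneg (f 2), sq_nonneg (f 3), sq_nonneg (f 4), sq_nonneg (f 5)]


abbrev Dom := Fin 3 × Fin 4 × Fin 5 × Fin 4 × Fin 3 × Fin 3

def nsq (a : ℕ) : ℕ := a*a

def qeqB (a b c d e f t : ℕ) : Bool :=
  2*(nsq a + nsq b + nsq c + nsq d + nsq e + nsq f) == 2*(a*b + b*c + c*d + d*e + c*f) + t

def tofun (p : Dom) : Fin 6 → ℤ :=
  ![(p.1 : ℤ), (p.2.1 : ℤ), (p.2.2.1 : ℤ), (p.2.2.2.1 : ℤ), (p.2.2.2.2.1 : ℤ), (p.2.2.2.2.2 : ℤ)]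

def WD : Finset Dom := univ.filter (fun p => qeqB p.1 p.2.1 p.2.2.1 p.2.2.2.1 p.2.2.2.2.1 p.2.2.2.2.2 (2*p.1))
def PD : Finset Dom := univ.filter (fun p => qeqB p.1 p.2.1 p.2.2.1 p.2.2.2.1 p.2.2.2.2.1 p.2.2.2.2.2 2)

set_option maxRecDepth 40000 in
lemma WD_card : WD.card = 27 := by decide
set_option maxRecDepth 40000 in
lemma PD_card : PD.card = 36 := by decide

lemma tofun_injective : Function.Injective tofun := by
  intro p q h
  obtain ⟨a,b,c,d,e,f⟩ := p; obtain ⟨a',b',c',d',e',f'⟩ := q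
  have h0 : ((a.val : ℕ) : ℤ) = (a'.val : ℕ) := congrFun h 0
  have h1 : ((b.val : ℕ) : ℤ) = (b'.val : ℕ) := congrFun h 1
  have h2 : ((c.val : ℕ) : ℤ) = (c'.val : ℕ) := congrFun h 2
  have h3 : ((d.val : ℕ) : ℤ) = (d'.val : ℕ) := congrFun h 3
  have h4 : ((e.val : ℕ) : ℤ) = (e'.val : ℕ) := congrFun h 4
  have h5 : ((f.val : ℕ) : ℤ) = (f'.val : ℤ) := congrFun h 5
  simp only [Nat.cast_inj] at h0 h1 h2 h3 h4 h5
  simp only [Prod.mk.injEq]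
  exact ⟨Fin.ext h0, Fin.ext h1, Fin.ext h2, Fin.ext h3, Fin.ext h4, Fin.ext h5⟩

def WF : Finset (Fin 6 → ℤ) := WD.image tofun
def PF : Finset (Fin 6 → ℤ) := PD.image tofun

lemma WF_card : WF.card = 27 := by
  rw [WF, Finset.card_image_of_injective _ tofun_injective, WD_card]
lemma PF_card : PF.card = 36 := by
  rw [PF, Finset.card_image_of_injective _ tofun_injective, PD_card]

lemma qeqB_iff (a b c d e f t : ℕ) :
    qeqB a b c d e f t = true ↔
      qE6 ![(a:ℤ),b,c,d,e,f] = t := by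
  rw [qeqB, beq_iff_eq]
  have hq : qE6 ![(a:ℤ),b,c,d,e,f]
      = 2*((a:ℤ)^2+(b:ℤ)^2+(c:ℤ)^2+(d:ℤ)^2+(e:ℤ)^2+(f:ℤ)^2)
        - 2*((a:ℤ)*b+(b:ℤ)*c+(c:ℤ)*d+(d:ℤ)*e+(c:ℤ)*f) := rfl
  rw [hq]
  rw [← @Nat.cast_inj ℤ]
  push_cast [nsq]
  constructor <;> intro h <;> linarith

lemma tofun_eq (p : Dom) :
    tofun p = ![(p.1.val : ℤ), p.2.1.val, p.2.2.1.val, p.2.2.2.1.val, p.2.2.2.2.1.val, p.2.2.2.2.2.val] := rfl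

lemma tofun_nonneg (p : Dom) : ∀ i, 0 ≤ tofun p i := by
  intro i
  fin_cases i
  · exact Int.natCast_nonneg p.1.val
  · exact Int.natCast_nonneg p.2.1.val
  · exact Int.natCast_nonneg p.2.2.1.val
  · exact Int.natCast_nonneg p.2.2.2.1.val
  · exact Int.natCast_nonneg p.2.2.2.2.1.val
  · exact Int.natCast_nonneg p.2.2.2.2.2.val

lemma WF_spec {f : Fin 6 → ℤ} (h : f ∈ WF) : (∀ i, 0 ≤ f i) ∧ qE6 f = 2 * f 0 := by
  rw [WF, Finset.mem_image] at h
  obtain ⟨p, hp, rfl⟩ := h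
  rw [WD, Finset.mem_filter] at hp
  have hq := (qeqB_iff p.1.val p.2.1.val p.2.2.1.val p.2.2.2.1.val p.2.2.2.2.1.val p.2.2.2.2.2.val (2*p.1.val)).mp hp.2
  refine ⟨tofun_nonneg p, ?_⟩
  rw [← tofun_eq p] at hq
  rw [hq]
  have h2 : tofun p 0 = (p.1.val : ℤ) := rfl
  rw [h2]; push_cast; ring

lemma PF_spec {f : Fin 6 → ℤ} (h : f ∈ PF) : (∀ i, 0 ≤ f i) ∧ qE6 f = 2 := by
  rw [PF, Finset.mem_image] at h
  obtain ⟨p, hp, rfl⟩ := h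
  rw [PD, Finset.mem_filter] at hp
  have hq := (qeqB_iff p.1.val p.2.1.val p.2.2.1.val p.2.2.2.1.val p.2.2.2.2.1.val p.2.2.2.2.2.val 2).mp hp.2
  refine ⟨tofun_nonneg p, ?_⟩
  rw [← tofun_eq p] at hq
  rw [hq]; norm_num

lemma mem_WF_of {f : Fin 6 → ℤ} (hf : ∀ i, 0 ≤ f i)
    (h0 : f 0 < 3) (h1 : f 1 < 4) (h2 : f 2 < 5) (h3 : f 3 < 4) (h4 : f 4 < 3) (h5 : f 5 < 3)
    (hq : qE6 f = 2 * f 0) : f ∈ WF := by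
  have e0 := hf 0; have e1 := hf 1; have e2 := hf 2
  have e3 := hf 3; have e4 := hf 4; have e5 := hf 5
  refine Finset.mem_image.mpr ⟨(⟨(f 0).toNat, by omega⟩, ⟨(f 1).toNat, by omega⟩, ⟨(f 2).toNat, by omega⟩,
    ⟨(f 3).toNat, by omega⟩, ⟨(f 4).toNat, by omega⟩, ⟨(f 5).toNat, by omega⟩), ?_, ?_⟩
  · rw [WD, Finset.mem_filter]
    refine ⟨Finset.mem_univ _, ?_⟩
    rw [show (2 * (f 0).toNat) = 2 * (f 0).toNat from rfl] at *
    rw [qeqB_iff]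
    have hfe : (![(((f 0).toNat : ℕ) : ℤ), ((f 1).toNat : ℕ), ((f 2).toNat : ℕ), ((f 3).toNat : ℕ), ((f 4).toNat : ℕ), ((f 5).toNat : ℕ)] : Fin 6 → ℤ) = f := by
      funext i
      fin_cases i
      · exact Int.toNat_of_nonneg e0
      · exact Int.toNat_of_nonneg e1
      · exact Int.toNat_of_nonneg e2
      · exact Int.toNat_of_nonneg e3
      · exact Int.toNat_of_nonneg e4
      · exact Int.toNat_of_nonneg e5
    rw [hfe, hq]
    push_cast
    rw [Int.toNat_of_nonneg e0]
  · funext i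
    fin_cases i
    · exact Int.toNat_of_nonneg e0
    · exact Int.toNat_of_nonneg e1
    · exact Int.toNat_of_nonneg e2
    · exact Int.toNat_of_nonneg e3
    · exact Int.toNat_of_nonneg e4
    · exact Int.toNat_of_nonneg e5

lemma mem_PF_of {f : Fin 6 → ℤ} (hf : ∀ i, 0 ≤ f i)
    (h0 : f 0 < 3) (h1 : f 1 < 4) (h2 : f 2 < 5) (h3 : f 3 < 4) (h4 : f 4 < 3) (h5 : f 5 < 3)
    (hq : qE6 f = 2) : f ∈ PF := by
  have e0 := hf 0; have e1 := hf 1; have e2 := hf 2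
  have e3 := hf 3; have e4 := hf 4; have e5 := hf 5
  refine Finset.mem_image.mpr ⟨(⟨(f 0).toNat, by omega⟩, ⟨(f 1).toNat, by omega⟩, ⟨(f 2).toNat, by omega⟩,
    ⟨(f 3).toNat, by omega⟩, ⟨(f 4).toNat, by omega⟩, ⟨(f 5).toNat, by omega⟩), ?_, ?_⟩
  · rw [PD, Finset.mem_filter]
    refine ⟨Finset.mem_univ _, ?_⟩
    rw [qeqB_iff]
    have hfe : (![(((f 0).toNat : ℕ) : ℤ), ((f 1).toNat : ℕ), ((f 2).toNat : ℕ), ((f 3).toNat : ℕ), ((f 4).toNat : ℕ), ((f 5).toNat : ℕ)] : Fin 6 → ℤ) = f := by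
      funext i
      fin_cases i
      · exact Int.toNat_of_nonneg e0
      · exact Int.toNat_of_nonneg e1
      · exact Int.toNat_of_nonneg e2
      · exact Int.toNat_of_nonneg e3
      · exact Int.toNat_of_nonneg e4
      · exact Int.toNat_of_nonneg e5
    rw [hfe, hq]
    norm_num
  · funext i
    fin_cases i
    · exact Int.toNat_of_nonneg e0
    · exact Int.toNat_of_nonneg e1
    · exact Int.toNat_of_nonneg e2
    · exact Int.toNat_of_nonneg e3
    · exact Int.toNat_of_nonneg e4
    · exact Int.toNat_of_nonneg e5

/-- chain coordinates as an ℕ-indexed sequence, `0` out of range -/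
def Xof (n : ℕ) (Y : FnV n → ℤ) : ℕ → ℤ :=
  fun k => if h : k < n then Y (some (Sum.inl ⟨k, h⟩)) else 0

def fof (n : ℕ) (Y : FnV n → ℤ) : Fin 6 → ℤ := fun j => Y (some (Sum.inr j))

-- value lemmas for FnM
lemma FnM_none_none (n : ℕ) : FnM n none none = -3 := by simp [FnM]

lemma FnM_none_inl (n : ℕ) (i : Fin n) :
    FnM n none (some (Sum.inl i)) = if i.val = 0 then 1 else 0 := by
  simp [FnM, FnAdj]

lemma FnM_inl_none (n : ℕ) (i : Fin n) :
    FnM n (some (Sum.inl i)) none = if i.val = 0 then 1 else 0 := by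
  simp [FnM, FnAdj]

lemma FnM_none_inr (n : ℕ) (j : Fin 6) :
    FnM n none (some (Sum.inr j)) = if j.val = 0 then 1 else 0 := by
  simp [FnM, FnAdj]

lemma FnM_inr_none (n : ℕ) (j : Fin 6) :
    FnM n (some (Sum.inr j)) none = if j.val = 0 then 1 else 0 := by
  simp [FnM, FnAdj]

lemma FnM_inl_inr (n : ℕ) (i : Fin n) (j : Fin 6) :
    FnM n (some (Sum.inl i)) (some (Sum.inr j)) = 0 := by
  simp [FnM, FnAdj]

lemma FnM_inr_inl (n : ℕ) (i : Fin n) (j : Fin 6) :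
    FnM n (some (Sum.inr j)) (some (Sum.inl i)) = 0 := by
  simp [FnM, FnAdj]

lemma FnM_inl_inl (n : ℕ) (i j : Fin n) :
    FnM n (some (Sum.inl i)) (some (Sum.inl j)) =
      if i.val = j.val then -2 else if i.val + 1 = j.val ∨ j.val + 1 = i.val then 1 else 0 := by
  by_cases h : i = j
  · subst h; simp [FnM]
  · have : i.val ≠ j.val := fun hv => h (Fin.ext hv)
    simp [FnM, FnAdj, h, this]

lemma FnM_inr_inr (n : ℕ) (i j : Fin 6) :
    FnM n (some (Sum.inr i)) (some (Sum.inr j)) =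
      if i.val = j.val then -2 else
        if (i.val + 1 = j.val ∧ j.val ≤ 4) ∨ (j.val + 1 = i.val ∧ i.val ≤ 4) ∨
            (i.val = 5 ∧ j.val = 2) ∨ (j.val = 5 ∧ i.val = 2) then 1 else 0 := by
  by_cases h : i = j
  · subst h; simp [FnM]
  · have : i.val ≠ j.val := fun hv => h (Fin.ext hv)
    simp [FnM, FnAdj, h, this]

section Chain
variable (X : ℕ → ℤ)

def cm (i j : ℕ) : ℤ := if i = j then -2 else if i+1 = j ∨ j+1 = i then 1 else 0

lemma row_sum (N : ℕ) :
    ∑ j ∈ range N, (X N * cm N j * X j) = if 0 < N then X N * X (N-1) else 0 := by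
  rcases Nat.eq_zero_or_pos N with h | h
  · subst h; simp
  · rw [if_pos h, Finset.sum_eq_single (N-1)]
    · have hc : cm N (N-1) = 1 := by
        unfold cm
        rw [if_neg (by omega : ¬ N = N-1), if_pos (by omega : N+1 = N-1 ∨ N-1+1 = N)]
      rw [hc]; ring
    · intro b hb hbne
      have hb' := Finset.mem_range.mp hb
      have hc : cm N b = 0 := by
        unfold cm
        rw [if_neg (by omega : ¬ N = b), if_neg (by omega : ¬ (N+1 = b ∨ b+1 = N))]
      rw [hc]; ring
    · intro hmem
      exact absurd (Finset.mem_range.mpr (by omega)) hmem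

lemma col_sum (N : ℕ) :
    ∑ i ∈ range N, (X i * cm i N * X N) = if 0 < N then X N * X (N-1) else 0 := by
  have hcongr : ∀ i ∈ range N, X i * cm i N * X N = X N * cm N i * X i := by
    intro i hi
    have : cm i N = cm N i := by unfold cm; split_ifs <;> first | rfl | omega
    rw [this]; ring
  rw [Finset.sum_congr rfl hcongr, row_sum]

lemma guard_shift (N : ℕ) :
    ∑ i ∈ range N, (if i+1 < N+1 then X i * X (i+1) else 0)
      = ∑ i ∈ range N, (if i+1 < N then X i * X (i+1) else 0)
        + (if 0 < N then X (N-1) * X N else 0) := by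
  have hcongr : ∀ i ∈ range N, (if i+1 < N+1 then X i * X (i+1) else 0)
      = (if i+1 < N then X i * X (i+1) else 0) + (if i = N-1 then X i * X (i+1) else 0) := by
    intro i hi
    have hi' := Finset.mem_range.mp hi
    split_ifs <;> first | omega | ring
  rw [Finset.sum_congr rfl hcongr, Finset.sum_add_distrib, Finset.sum_ite_eq' (range N) (N-1)]
  rcases Nat.eq_zero_or_pos N with h | h
  · subst h; simp
  · rw [if_pos (Finset.mem_range.mpr (by omega)), if_pos h]
    have h2 : N - 1 + 1 = N := by omega
    rw [h2]

lemma chainlem (N : ℕ) :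
    ∑ i ∈ range N, ∑ j ∈ range N, (X i * cm i j * X j)
    = -2 * ∑ i ∈ range N, (X i)^2
      + 2 * ∑ i ∈ range N, (if i+1 < N then X i * X (i+1) else 0) := by
  induction N with
  | zero => simp
  | succ N ih =>
    have expand : ∑ i ∈ range (N+1), ∑ j ∈ range (N+1), (X i * cm i j * X j)
        = (∑ i ∈ range N, ∑ j ∈ range N, (X i * cm i j * X j))
          + (∑ i ∈ range N, (X i * cm i N * X N))
          + (∑ j ∈ range N, (X N * cm N j * X j))
          + X N * cm N N * X N := by
      rw [Finset.sum_range_succ]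
      rw [Finset.sum_congr rfl (fun i _ => Finset.sum_range_succ (fun j => X i * cm i j * X j) N)]
      rw [Finset.sum_add_distrib, Finset.sum_range_succ]
      ring
    have hcm : cm N N = -2 := by unfold cm; simp
    rw [expand, ih, row_sum, col_sum, hcm]
    rw [Finset.sum_range_succ (fun i => (X i)^2)]
    rw [Finset.sum_range_succ (fun i => if i+1 < N+1 then X i * X (i+1) else 0)]
    rw [if_neg (by omega : ¬ (N+1 < N+1)), guard_shift]
    rcases Nat.eq_zero_or_pos N with h | h
    · subst h; simp; ring
    · simp only [if_pos h]; ring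

end Chain

section Expand
variable (n : ℕ) (Y : FnV n → ℤ)

lemma Xof_val (i : Fin n) : Xof n Y i.val = Y (some (Sum.inl i)) := by
  simp [Xof]

lemma Xof_ge {k : ℕ} (h : n ≤ k) : Xof n Y k = 0 := by
  simp [Xof]; omega

lemma sum_none_inl :
    ∑ i : Fin n, Y none * FnM n none (some (Sum.inl i)) * Y (some (Sum.inl i))
      = Y none * Xof n Y 0 := by
  have key : ∑ k ∈ range n, (if k = 0 then Y none * Xof n Y k else 0) = Y none * Xof n Y 0 := by
    rw [Finset.sum_ite_eq' (range n) 0 (fun k => Y none * Xof n Y k)]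
    rcases Nat.eq_zero_or_pos n with h | h
    · rw [if_neg (by simp [h]), Xof_ge n Y (by omega), mul_zero]
    · rw [if_pos (Finset.mem_range.mpr h)]
  rw [← key, ← Fin.sum_univ_eq_sum_range (fun k => if k = 0 then Y none * Xof n Y k else 0) n]
  apply Finset.sum_congr rfl
  intro i _
  rw [FnM_none_inl, ← Xof_val n Y i]
  by_cases h : (i : ℕ) = 0 <;> simp [h]

lemma sum_inl_none :
    ∑ i : Fin n, Y (some (Sum.inl i)) * FnM n (some (Sum.inl i)) none * Y none
      = Y none * Xof n Y 0 := by
  have hc : ∀ i : Fin n, Y (some (Sum.inl i)) * FnM n (some (Sum.inl i)) none * Y none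
      = Y none * FnM n none (some (Sum.inl i)) * Y (some (Sum.inl i)) := by
    intro i
    rw [FnM_inl_none, FnM_none_inl]
    ring
  rw [Fintype.sum_congr _ _ hc, sum_none_inl]

lemma sum_inl_inl :
    ∑ i : Fin n, ∑ j : Fin n,
        Y (some (Sum.inl i)) * FnM n (some (Sum.inl i)) (some (Sum.inl j)) * Y (some (Sum.inl j))
      = -2 * ∑ i ∈ range n, (Xof n Y i)^2 + 2 * ∑ i ∈ range n, Xof n Y i * Xof n Y (i+1) := by
  have key : ∑ i ∈ range n, ∑ j ∈ range n, (Xof n Y i * cm i j * Xof n Y j)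
      = -2 * ∑ i ∈ range n, (Xof n Y i)^2 + 2 * ∑ i ∈ range n, Xof n Y i * Xof n Y (i+1) := by
    rw [chainlem]
    congr 1
    congr 1
    apply Finset.sum_congr rfl
    intro i hi
    rcases Nat.lt_or_ge (i+1) n with h | h
    · rw [if_pos h]
    · rw [if_neg (by omega), Xof_ge n Y h, mul_zero]
  rw [← key, ← Fin.sum_univ_eq_sum_range (fun i => ∑ j ∈ range n, (Xof n Y i * cm i j * Xof n Y j)) n]
  apply Finset.sum_congr rfl
  intro i _
  show _ = ∑ j ∈ range n, (Xof n Y i.val * cm i.val j * Xof n Y j)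
  rw [← Fin.sum_univ_eq_sum_range (fun j => (Xof n Y i.val * cm i.val j * Xof n Y j)) n]
  apply Finset.sum_congr rfl
  intro j _
  show _ = Xof n Y i.val * cm i.val j.val * Xof n Y j.val
  rw [FnM_inl_inl, ← Xof_val n Y i, ← Xof_val n Y j]
  rfl

lemma sum_inl_inr (i : Fin n) :
    ∑ j : Fin 6, Y (some (Sum.inl i)) * FnM n (some (Sum.inl i)) (some (Sum.inr j)) * Y (some (Sum.inr j)) = 0 := by
  apply Finset.sum_eq_zero
  intro j _
  rw [FnM_inl_inr]; ring

lemma sum_inr_inl (j : Fin 6) :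
    ∑ i : Fin n, Y (some (Sum.inr j)) * FnM n (some (Sum.inr j)) (some (Sum.inl i)) * Y (some (Sum.inl i)) = 0 := by
  apply Finset.sum_eq_zero
  intro i _
  rw [FnM_inr_inl]; ring

lemma sum_inr_inr :
    ∑ i : Fin 6, ∑ j : Fin 6,
        Y (some (Sum.inr i)) * FnM n (some (Sum.inr i)) (some (Sum.inr j)) * Y (some (Sum.inr j))
      = - qE6 (fun j => Y (some (Sum.inr j))) := by
  simp only [Fin.sum_univ_six]
  simp (config := { decide := true }) only [FnM, FnAdj]
  simp
  unfold qE6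
  ring

lemma sum_none_inr :
    ∑ j : Fin 6, Y none * FnM n none (some (Sum.inr j)) * Y (some (Sum.inr j))
      = Y none * Y (some (Sum.inr 0)) := by
  simp only [Fin.sum_univ_six]
  simp (config := { decide := true }) only [FnM, FnAdj]
  simp

lemma sum_inr_none :
    ∑ j : Fin 6, Y (some (Sum.inr j)) * FnM n (some (Sum.inr j)) none * Y none
      = Y none * Y (some (Sum.inr 0)) := by
  simp only [Fin.sum_univ_six]
  simp (config := { decide := true }) only [FnM, FnAdj]
  simp
  ring

lemma FnQ_eq :
    FnQ n Y = -3*(Y none)^2 + 2*(Y none)*(Xof n Y 0) + 2*(Y none)*(Y (some (Sum.inr 0)))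
      - 2*∑ i ∈ range n, (Xof n Y i)^2 + 2*∑ i ∈ range n, Xof n Y i * Xof n Y (i+1)
      - qE6 (fun j => Y (some (Sum.inr j))) := by
  unfold FnQ
  rw [Fintype.sum_option]
  rw [Fintype.sum_sum_type]
  rw [Fintype.sum_option (fun y => Y none * FnM n none y * Y y)]
  rw [Fintype.sum_sum_type (fun y => Y none * FnM n none (some y) * Y (some y))]
  have hinl : ∀ i : Fin n, ∑ y : FnV n, Y (some (Sum.inl i)) * FnM n (some (Sum.inl i)) y * Y y
      = Y (some (Sum.inl i)) * FnM n (some (Sum.inl i)) none * Y none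
        + ∑ j : Fin n, Y (some (Sum.inl i)) * FnM n (some (Sum.inl i)) (some (Sum.inl j)) * Y (some (Sum.inl j))
        + ∑ j : Fin 6, Y (some (Sum.inl i)) * FnM n (some (Sum.inl i)) (some (Sum.inr j)) * Y (some (Sum.inr j)) := by
    intro i
    rw [Fintype.sum_option (fun y => Y (some (Sum.inl i)) * FnM n (some (Sum.inl i)) y * Y y)]
    rw [Fintype.sum_sum_type (fun y => Y (some (Sum.inl i)) * FnM n (some (Sum.inl i)) (some y) * Y (some y))]
    ring
  have hinr : ∀ j : Fin 6, ∑ y : FnV n, Y (some (Sum.inr j)) * FnM n (some (Sum.inr j)) y * Y y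
      = Y (some (Sum.inr j)) * FnM n (some (Sum.inr j)) none * Y none
        + ∑ i : Fin n, Y (some (Sum.inr j)) * FnM n (some (Sum.inr j)) (some (Sum.inl i)) * Y (some (Sum.inl i))
        + ∑ i : Fin 6, Y (some (Sum.inr j)) * FnM n (some (Sum.inr j)) (some (Sum.inr i)) * Y (some (Sum.inr i)) := by
    intro j
    rw [Fintype.sum_option (fun y => Y (some (Sum.inr j)) * FnM n (some (Sum.inr j)) y * Y y)]
    rw [Fintype.sum_sum_type (fun y => Y (some (Sum.inr j)) * FnM n (some (Sum.inr j)) (some y) * Y (some y))]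
    ring
  rw [Fintype.sum_congr _ _ hinl, Fintype.sum_congr _ _ hinr]
  rw [Finset.sum_add_distrib, Finset.sum_add_distrib, Finset.sum_add_distrib, Finset.sum_add_distrib]
  have hz1 : ∑ x : Fin n, ∑ j : Fin 6, Y (some (Sum.inl x)) * FnM n (some (Sum.inl x)) (some (Sum.inr j)) * Y (some (Sum.inr j)) = 0 :=
    Finset.sum_eq_zero (fun i _ => sum_inl_inr n Y i)
  have hz2 : ∑ x : Fin 6, ∑ i : Fin n, Y (some (Sum.inr x)) * FnM n (some (Sum.inr x)) (some (Sum.inl i)) * Y (some (Sum.inl i)) = 0 :=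
    Finset.sum_eq_zero (fun j _ => sum_inr_inl n Y j)
  rw [hz1, hz2, sum_none_inl, sum_inl_none, sum_none_inr, sum_inr_none, sum_inl_inl, sum_inr_inr, FnM_none_none]
  ring

end Expand

section Master
variable (n : ℕ) (Y : FnV n → ℤ)

/-- augmented path: value at `E₀` then chain values -/
def psf : ℕ → ℤ := fun k => if k = 0 then Y none else Xof n Y (k-1)

/-- steps of the augmented path -/
def sof : ℕ → ℤ := fun k => psf n Y k - psf n Y (k+1)

lemma psf_succ (k : ℕ) : psf n Y (k+1) = Xof n Y k := by simp [psf]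

lemma sof_tel (m : ℕ) : ∑ k ∈ range m, sof n Y k = Y none - psf n Y m := by
  unfold sof
  rw [Finset.sum_range_sub' (psf n Y) m]
  rfl

lemma Xof_eq_sub (k : ℕ) : Xof n Y k = Y none - ∑ m ∈ range (k+1), sof n Y m := by
  rw [sof_tel, psf_succ]; ring

lemma pathsq :
    ∑ k ∈ range (n+1), (sof n Y k)^2
      = (Y none)^2 - 2*(Y none)*(Xof n Y 0) + 2*∑ i ∈ range n, (Xof n Y i)^2
        - 2*∑ i ∈ range n, Xof n Y i * Xof n Y (i+1) := by
  rw [Finset.sum_range_succ' (fun k => (sof n Y k)^2) n]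
  have h0 : (sof n Y 0)^2 = (Y none)^2 - 2*(Y none)*(Xof n Y 0) + (Xof n Y 0)^2 := by
    simp only [sof, psf]
    norm_num
    ring
  have hc : ∀ k ∈ range n, (sof n Y (k+1))^2
      = (Xof n Y k)^2 - 2*(Xof n Y k * Xof n Y (k+1)) + (fun m => (Xof n Y (m+1))^2) k := by
    intro k _
    simp only [sof, psf_succ]
    ring
  rw [Finset.sum_congr rfl hc, Finset.sum_add_distrib, Finset.sum_sub_distrib]
  have hshift : ∑ k ∈ range n, (fun m => (Xof n Y (m+1))^2) k
      = ∑ k ∈ range n, (Xof n Y k)^2 - (Xof n Y 0)^2 := by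
    have h1 := Finset.sum_range_succ' (fun k => (Xof n Y k)^2) n
    have h2 := Finset.sum_range_succ (fun k => (Xof n Y k)^2) n
    have h3 : Xof n Y n = 0 := Xof_ge n Y (le_refl n)
    rw [h3] at h2
    simp at h2
    rw [h2] at h1
    linarith
  rw [hshift]
  rw [show (∑ x ∈ range n, 2*(Xof n Y x * Xof n Y (x+1)))
      = 2*∑ x ∈ range n, Xof n Y x * Xof n Y (x+1) from by rw [Finset.mul_sum]]
  rw [h0]
  ring

lemma master :
    FnQ n Y = -((Y none)^2 + (∑ k ∈ range (n+1), (sof n Y k)^2)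
      + ((Y none)^2 + qE6 (fun j => Y (some (Sum.inr j))) - 2*(Y none)*(Y (some (Sum.inr 0))))) := by
  rw [FnQ_eq, pathsq]
  ring

lemma parity : (2:ℤ) ∣ FnQ n Y + (Y none)^2 := by
  refine ⟨-(Y none)^2 + (Y none)*(Xof n Y 0) + (Y none)*(Y (some (Sum.inr 0)))
    - ∑ i ∈ range n, (Xof n Y i)^2 + ∑ i ∈ range n, Xof n Y i * Xof n Y (i+1)
    - ((Y (some (Sum.inr 0)))^2 + (Y (some (Sum.inr 1)))^2 + (Y (some (Sum.inr 2)))^2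
      + (Y (some (Sum.inr 3)))^2 + (Y (some (Sum.inr 4)))^2 + (Y (some (Sum.inr 5)))^2
      - (Y (some (Sum.inr 0)) * Y (some (Sum.inr 1)) + Y (some (Sum.inr 1)) * Y (some (Sum.inr 2))
        + Y (some (Sum.inr 2)) * Y (some (Sum.inr 3)) + Y (some (Sum.inr 3)) * Y (some (Sum.inr 4))
        + Y (some (Sum.inr 2)) * Y (some (Sum.inr 5)))), ?_⟩
  rw [FnQ_eq]
  unfold qE6
  ring

end Master

section Steps
variable {N : ℕ} {s : ℕ → ℤ}

lemma sq_ge_one {a : ℤ} (h : a ≠ 0) : 1 ≤ a^2 := by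
  rcases lt_or_gt_of_ne h with h' | h' <;> nlinarith

lemma sumsq_one (h2 : ∑ k ∈ range N, (s k)^2 = 1) (hs : ∑ k ∈ range N, s k = 1) :
    ∃ t, t < N ∧ ∀ k, k < N → s k = if k = t then 1 else 0 := by
  classical
  set T := (range N).filter (fun k => s k ≠ 0) with hT
  have hsq : ∑ k ∈ T, (s k)^2 = 1 := by
    rw [hT, Finset.sum_filter_of_ne]
    · exact h2
    · intro x _ hx h0
      rw [h0] at hx; simp at hx
  have hss : ∑ k ∈ T, s k = 1 := by
    rw [hT, Finset.sum_filter_of_ne]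
    · exact hs
    · exact fun x _ hx => hx
  have hcard : T.card ≤ 1 := by
    by_contra hc
    push_neg at hc
    obtain ⟨a, ha, b, hb, hab⟩ := Finset.one_lt_card.mp hc
    have g1 : 1 ≤ (s a)^2 := sq_ge_one (Finset.mem_filter.mp ha).2
    have g2 : 1 ≤ (s b)^2 := sq_ge_one (Finset.mem_filter.mp hb).2
    have hle : (s a)^2 + (s b)^2 ≤ ∑ k ∈ T, (s k)^2 := by
      calc (s a)^2 + (s b)^2 = ∑ k ∈ ({a,b} : Finset ℕ), (s k)^2 := (Finset.sum_pair (f := fun k => (s k)^2) hab).symm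
        _ ≤ ∑ k ∈ T, (s k)^2 := by
            apply Finset.sum_le_sum_of_subset_of_nonneg
            · intro x hx
              rcases Finset.mem_insert.mp hx with h | h
              · subst h; exact ha
              · rw [Finset.mem_singleton.mp h]; exact hb
            · intro x _ _; positivity
    omega
  have hne : T.Nonempty := by
    by_contra hc
    rw [Finset.not_nonempty_iff_eq_empty] at hc
    rw [hc] at hss; simp at hss
  obtain ⟨t, ht⟩ := Finset.card_eq_one.mp (le_antisymm hcard (Finset.one_le_card.mpr hne))
  rw [ht] at hss
  simp at hss
  refine ⟨t, ?_, ?_⟩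
  · have : t ∈ T := by rw [ht]; exact Finset.mem_singleton_self t
    exact Finset.mem_range.mp (Finset.mem_filter.mp this).1
  · intro k hkN
    by_cases hk : k = t
    · rw [if_pos hk, hk, hss]
    · rw [if_neg hk]
      by_contra h0
      have : k ∈ T := Finset.mem_filter.mpr ⟨Finset.mem_range.mpr hkN, h0⟩
      rw [ht, Finset.mem_singleton] at this
      exact hk this

lemma sumsq_two (h2 : ∑ k ∈ range N, (s k)^2 = 2) (hs : ∑ k ∈ range N, s k = 0)
    (hpart : ∀ m, m ≤ N → ∑ k ∈ range m, s k ≤ 0) :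
    ∃ i j, i < j ∧ j < N ∧ s i = -1 ∧ s j = 1 ∧ ∀ k, k < N → k ≠ i → k ≠ j → s k = 0 := by
  classical
  set T := (range N).filter (fun k => s k ≠ 0) with hT
  have hmem : ∀ {k}, k ∈ T → k < N ∧ s k ≠ 0 := by
    intro k hk
    have := Finset.mem_filter.mp hk
    exact ⟨Finset.mem_range.mp this.1, this.2⟩
  have hzero : ∀ k, k < N → k ∉ T → s k = 0 := by
    intro k hkN hk
    by_contra h0
    exact hk (Finset.mem_filter.mpr ⟨Finset.mem_range.mpr hkN, h0⟩)
  have hsq : ∑ k ∈ T, (s k)^2 = 2 := by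
    rw [hT, Finset.sum_filter_of_ne]
    · exact h2
    · intro x _ hx h0
      rw [h0] at hx; simp at hx
  have hss : ∑ k ∈ T, s k = 0 := by
    rw [hT, Finset.sum_filter_of_ne]
    · exact hs
    · exact fun x _ hx => hx
  have hcard2 : T.card ≤ 2 := by
    by_contra hc
    push_neg at hc
    obtain ⟨a, ha, b, hb, c, hc', hab, hac, hbc⟩ := Finset.two_lt_card.mp hc
    have g1 : 1 ≤ (s a)^2 := sq_ge_one (hmem ha).2
    have g2 : 1 ≤ (s b)^2 := sq_ge_one (hmem hb).2
    have g3 : 1 ≤ (s c)^2 := sq_ge_one (hmem hc').2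
    have hle : (s a)^2 + (s b)^2 + (s c)^2 ≤ ∑ k ∈ T, (s k)^2 := by
      have hsub : {a, b, c} ⊆ T := by
        intro x hx
        rcases Finset.mem_insert.mp hx with h | hx'
        · subst h; exact ha
        rcases Finset.mem_insert.mp hx' with h | hx''
        · subst h; exact hb
        · rw [Finset.mem_singleton.mp hx'']; exact hc'
      calc (s a)^2 + (s b)^2 + (s c)^2 = ∑ k ∈ {a,b,c}, (s k)^2 := by
            rw [Finset.sum_insert (by simp [hab, hac]), Finset.sum_pair hbc]
            ring
        _ ≤ ∑ k ∈ T, (s k)^2 :=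
            Finset.sum_le_sum_of_subset_of_nonneg hsub (fun x _ _ => by positivity)
    omega
  have hne2 : 2 ≤ T.card := by
    rcases Nat.lt_or_ge T.card 2 with hlt | hge
    · exfalso
      interval_cases h : T.card
      · rw [Finset.card_eq_zero.mp h] at hsq
        simp at hsq
      · obtain ⟨t, ht⟩ := Finset.card_eq_one.mp h
        rw [ht] at hsq hss
        simp at hsq hss
        rw [hss] at hsq
        simp at hsq
    · exact hge
  obtain ⟨a, b, hab, hTab⟩ := Finset.card_eq_two.mp (le_antisymm hcard2 hne2)
  -- order them
  obtain ⟨i, j, hij, hTij⟩ : ∃ i j, i < j ∧ T = {i, j} := by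
    rcases lt_or_gt_of_ne hab with h | h
    · exact ⟨a, b, h, hTab⟩
    · refine ⟨b, a, h, ?_⟩
      rw [hTab]
      ext x
      simp
      tauto
  have hijne : i ≠ j := Nat.ne_of_lt hij
  rw [hTij] at hsq hss
  rw [Finset.sum_pair hijne] at hsq hss
  have hiT : i ∈ T := by rw [hTij]; simp
  have hjT : j ∈ T := by rw [hTij]; simp
  have hsqi : (s i)^2 = 1 ∧ (s j)^2 = 1 := by
    have g1 : 1 ≤ (s i)^2 := sq_ge_one (hmem hiT).2
    have g2 : 1 ≤ (s j)^2 := sq_ge_one (hmem hjT).2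
    omega
  have hipm : s i = 1 ∨ s i = -1 := by
    have := hsqi.1
    have hfac : (s i - 1) * (s i + 1) = 0 := by nlinarith [hsqi.1]
    rcases mul_eq_zero.mp hfac with h | h
    · left; linarith
    · right; linarith
  have hiN : i < N := (hmem hiT).1
  have hjN : j < N := (hmem hjT).1
  have hparti : ∑ k ∈ range (i+1), s k = s i := by
    rw [Finset.sum_range_succ]
    have : ∑ k ∈ range i, s k = 0 := by
      apply Finset.sum_eq_zero
      intro k hk
      have hk' := Finset.mem_range.mp hk
      have hkN : k < N := by omega
      apply hzero k hkN
      rw [hTij]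
      simp
      constructor <;> omega
    rw [this, zero_add]
  have hile : i + 1 ≤ N := hiN
  have hsi : s i = -1 := by
    have hp := hpart (i+1) hile
    rw [hparti] at hp
    rcases hipm with h | h
    · omega
    · exact h
  have hsj : s j = 1 := by omega
  refine ⟨i, j, hij, hjN, hsi, hsj, ?_⟩
  intro k hkN hki hkj
  apply hzero k hkN
  rw [hTij]
  simp
  exact ⟨hki, hkj⟩

end Steps

section Constructions
variable (n : ℕ)

def mkY (a : ℤ) (X : ℕ → ℤ) (f : Fin 6 → ℤ) : FnV n → ℤ
  | none => a
  | some (Sum.inl i) => X i.val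
  | some (Sum.inr j) => f j

lemma mkY_none (a : ℤ) (X : ℕ → ℤ) (f : Fin 6 → ℤ) : mkY n a X f none = a := rfl

lemma Xof_mkY (a : ℤ) (X : ℕ → ℤ) (f : Fin 6 → ℤ) (hX : ∀ k, n ≤ k → X k = 0) :
    Xof n (mkY n a X f) = X := by
  funext k
  unfold Xof
  split
  · rfl
  · next h => exact (hX k (by omega)).symm

lemma sof_mkY (a : ℤ) (X : ℕ → ℤ) (f : Fin 6 → ℤ) (hX : ∀ k, n ≤ k → X k = 0) (k : ℕ) :
    sof n (mkY n a X f) k = (if k = 0 then a else X (k-1)) - X k := by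
  unfold sof psf
  rw [Xof_mkY n a X f hX]
  rcases Nat.eq_zero_or_pos k with h | h
  · subst h; rfl
  · rw [if_neg (show ¬ (k + 1 = 0) by omega), Nat.add_sub_cancel]
    simp only [mkY_none]

lemma fof_mkY (a : ℤ) (X : ℕ → ℤ) (f : Fin 6 → ℤ) :
    (fun j => mkY n a X f (some (Sum.inr j))) = f := rfl

lemma mkY_inr (a : ℤ) (X : ℕ → ℤ) (f : Fin 6 → ℤ) (j : Fin 6) :
    mkY n a X f (some (Sum.inr j)) = f j := rfl

lemma qE6_zero_eval : qE6 (0 : Fin 6 → ℤ) = 0 := by simp [qE6]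

/-- interval indicator -/
def indi (i j k : ℕ) : ℤ := if i ≤ k ∧ k < j then 1 else 0

/-- prefix indicator -/
def prei (t k : ℕ) : ℤ := if k < t then 1 else 0

lemma FnQ_interval {i j : ℕ} (hij : i < j) (hj : j ≤ n) :
    FnQ n (mkY n 0 (indi i j) 0) = -2 := by
  have hX : ∀ k, n ≤ k → indi i j k = 0 := by
    intro k hk; unfold indi; rw [if_neg (by omega)]
  rw [master]
  have hs : ∀ k, sof n (mkY n 0 (indi i j) 0) k = (if k = i then -1 else 0) + (if k = j then 1 else 0) := by
    intro k
    rw [sof_mkY n 0 (indi i j) 0 hX]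
    unfold indi
    split_ifs <;> omega
  have hsum : ∑ k ∈ range (n+1), (sof n (mkY n 0 (indi i j) 0) k)^2 = 2 := by
    have hsq : ∀ k ∈ range (n+1), (sof n (mkY n 0 (indi i j) 0) k)^2
        = (if k = i then 1 else 0) + (if k = j then 1 else 0) := by
      intro k _
      rw [hs k]
      split_ifs <;> first | omega | ring
    rw [Finset.sum_congr rfl hsq, Finset.sum_add_distrib,
      Finset.sum_ite_eq' (range (n+1)) i (fun _ => (1:ℤ)),
      Finset.sum_ite_eq' (range (n+1)) j (fun _ => (1:ℤ))]
    rw [if_pos (Finset.mem_range.mpr (by omega)), if_pos (Finset.mem_range.mpr (by omega))]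
    norm_num
  rw [hsum, fof_mkY, mkY_inr, qE6_zero_eval]
  simp only [mkY_none]
  norm_num

lemma FnQ_e6 (f : Fin 6 → ℤ) (hq : qE6 f = 2) :
    FnQ n (mkY n 0 (fun _ => 0) f) = -2 := by
  rw [master]
  have hs : ∀ k, sof n (mkY n 0 (fun _ => 0) f) k = 0 := by
    intro k
    rw [sof_mkY n 0 (fun _ => 0) f (fun _ _ => rfl)]
    split_ifs <;> ring
  have hsum : ∑ k ∈ range (n+1), (sof n (mkY n 0 (fun _ => 0) f) k)^2 = 0 := by
    apply Finset.sum_eq_zero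
    intro k _
    rw [hs k]
    ring
  rw [hsum, fof_mkY, mkY_inr, hq]
  simp only [mkY_none]
  norm_num

lemma FnQ_prefix {t : ℕ} (ht : t ≤ n) (f : Fin 6 → ℤ) (hq : qE6 f = 2 * f 0) :
    FnQ n (mkY n 1 (prei t) f) = -3 := by
  have hX : ∀ k, n ≤ k → prei t k = 0 := by
    intro k hk; unfold prei; rw [if_neg (by omega)]
  rw [master]
  have hs : ∀ k, sof n (mkY n 1 (prei t) f) k = if k = t then 1 else 0 := by
    intro k
    rw [sof_mkY n 1 (prei t) f hX]
    unfold prei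
    split_ifs <;> omega
  have hsum : ∑ k ∈ range (n+1), (sof n (mkY n 1 (prei t) f) k)^2 = 1 := by
    have hsq : ∀ k ∈ range (n+1), (sof n (mkY n 1 (prei t) f) k)^2
        = if k = t then 1 else 0 := by
      intro k _
      rw [hs k]
      split_ifs <;> ring
    rw [Finset.sum_congr rfl hsq, Finset.sum_ite_eq' (range (n+1)) t (fun _ => (1:ℤ))]
    rw [if_pos (Finset.mem_range.mpr (by omega))]
  rw [hsum, fof_mkY, mkY_inr, hq]
  simp only [mkY_none]
  ring

end Constructions

section MainSets
variable (n : ℕ)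

def T1 : Finset (FnV n → ℤ) :=
  ((range (n+1)).sigma (fun j => range j)).image
    (fun p => mkY n 0 (indi p.2 p.1) 0)

def T2 : Finset (FnV n → ℤ) := PF.image (fun f => mkY n 0 (fun _ => 0) f)

def T3 : Finset (FnV n → ℤ) :=
  ((range (n+1)) ×ˢ WF).image (fun p => mkY n 1 (prei p.1) p.2)

def Tpos : Finset (FnV n → ℤ) := T1 n ∪ T2 n ∪ T3 n

def Tall : Finset (FnV n → ℤ) := Tpos n ∪ (Tpos n).image (fun Y => -Y)

end MainSets

set_option maxHeartbeats 2000000 in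
lemma pos_classify (n : ℕ) (Y : FnV n → ℤ) (hY : Y ≠ 0) (hpos : ∀ i, 0 ≤ Y i)
    (hQ : FnQ n Y = -2 ∨ FnQ n Y = -3) : Y ∈ Tpos n := by
  classical
  have hm := master n Y
  have hpar := parity n Y
  set f : Fin 6 → ℤ := fun j => Y (some (Sum.inr j)) with hf_def
  have hf0 : Y (some (Sum.inr 0)) = f 0 := rfl
  rw [hf0] at hm
  set a := Y none with ha_def
  set w := ∑ k ∈ range (n+1), (sof n Y k)^2 with hw_def
  have ha0 : 0 ≤ a := hpos none
  have hfpos : ∀ i, 0 ≤ f i := fun i => hpos _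
  have hw0 : 0 ≤ w := Finset.sum_nonneg (fun k _ => sq_nonneg _)
  have hq60 : 0 ≤ qE6 f := qE6_nonneg f
  have hXpos : ∀ k, 0 ≤ Xof n Y k := by
    intro k
    unfold Xof
    split
    · exact hpos _
    · exact le_refl 0
  have hpsf : ∀ m, 0 ≤ psf n Y m := by
    intro m
    unfold psf
    split
    · exact ha0
    · exact hXpos _
  have htel : ∑ k ∈ range (n+1), sof n Y k = a := by
    rw [sof_tel, psf_succ, Xof_ge n Y (le_refl n), sub_zero]
  have hwgea : a ≤ w := by
    calc a = ∑ k ∈ range (n+1), sof n Y k := htel.symm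
      _ ≤ w := Finset.sum_le_sum (fun k _ => by nlinarith [sq_nonneg (sof n Y k - 1)])
  have hq6even : (2:ℤ) ∣ qE6 f := by
    refine ⟨(f 0)^2 + (f 1)^2 + (f 2)^2 + (f 3)^2 + (f 4)^2 + (f 5)^2
      - (f 0 * f 1 + f 1 * f 2 + f 2 * f 3 + f 3 * f 4 + f 2 * f 5), ?_⟩
    unfold qE6; ring
  have hBge : -a^2 ≤ 3*(a^2 + qE6 f - 2*a*(f 0)) := by
    nlinarith [qE6_b0 f, sq_nonneg (4*a - 3*(f 0))]
  have hsum3 : a^2 + w + (a^2 + qE6 f - 2*a*(f 0)) ≤ 3 := by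
    rcases hQ with h | h <;> (rw [hm] at h; linarith)
  have ha1 : a ≤ 1 := by nlinarith
  interval_cases a
  · -- a = 0
    have hQ2 : FnQ n Y = -2 := by
      rcases hQ with h | h
      · exact h
      · exfalso
        rw [h] at hpar
        norm_num at hpar
    have h0 : w + qE6 f = 2 := by
      rw [hm] at hQ2
      linarith
    have hwe : w = 0 ∨ w = 2 := by omega
    rcases hwe with hw | hw
    · -- E6 root case
      have hq2 : qE6 f = 2 := by omega
      have hz : ∀ k ∈ range (n+1), (sof n Y k)^2 = 0 :=
        (Finset.sum_eq_zero_iff_of_nonneg (fun k _ => sq_nonneg (sof n Y k))).mp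
          (by rw [← hw_def]; exact hw)
      have hXz : ∀ k, Xof n Y k = 0 := by
        intro k
        rcases Nat.lt_or_ge k n with hk | hk
        · rw [Xof_eq_sub]
          have hzz : ∑ m ∈ range (k+1), sof n Y m = 0 := by
            apply Finset.sum_eq_zero
            intro m hm'
            have hmr := Finset.mem_range.mp hm'
            exact sq_eq_zero_iff.mp (hz m (Finset.mem_range.mpr (by omega)))
          rw [hzz, ← ha_def]
          norm_num
        · exact Xof_ge n Y hk
      have hYeq : Y = mkY n 0 (fun _ => 0) f := by
        funext v
        match v with
        | none => exact ha_def.symm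
        | some (Sum.inl i) =>
          show Y (some (Sum.inl i)) = 0
          rw [← Xof_val n Y i]
          exact hXz i.val
        | some (Sum.inr j) => rfl
      have hfPF : f ∈ PF := by
        apply mem_PF_of hfpos
        · nlinarith [qE6_b0 f, hfpos 0]
        · nlinarith [qE6_b1 f, hfpos 1]
        · nlinarith [qE6_b2 f, hfpos 2]
        · nlinarith [qE6_b3 f, hfpos 3]
        · nlinarith [qE6_b4 f, hfpos 4]
        · nlinarith [qE6_b5 f, hfpos 5]
        · exact hq2
      rw [hYeq]
      exact Finset.mem_union_left _ (Finset.mem_union_right _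
        (Finset.mem_image_of_mem _ hfPF))
    · -- interval root case
      have hq0 : qE6 f = 0 := by omega
      have hfz : f = 0 := qE6_zero hq0
      have hpart : ∀ m, m ≤ n+1 → ∑ k ∈ range m, sof n Y k ≤ 0 := by
        intro m _
        rw [sof_tel, ← ha_def]
        have := hpsf m
        omega
      obtain ⟨i, j, hij, hjN, hsi, hsj, hrest⟩ :=
        sumsq_two (by rw [← hw_def]; exact hw) htel hpart
      have hYeq : Y = mkY n 0 (indi i j) 0 := by
        funext v
        match v with
        | none => exact ha_def.symm
        | some (Sum.inr m) =>
          show f m = _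
          rw [hfz]
          rfl
        | some (Sum.inl m) =>
          show Y (some (Sum.inl m)) = indi i j m.val
          rw [← Xof_val n Y m, Xof_eq_sub, ← ha_def]
          have hsum : ∑ k ∈ range (m.val+1), sof n Y k
              = (if i ≤ m.val then (-1:ℤ) else 0) + (if j ≤ m.val then (1:ℤ) else 0) := by
            have hc : ∀ k ∈ range (m.val+1), sof n Y k
                = (if k = i then (-1:ℤ) else 0) + (if k = j then (1:ℤ) else 0) := by
              intro k hk
              have hkm := Finset.mem_range.mp hk
              have hmlt := m.isLt
              have hkN : k < n + 1 := by omega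
              by_cases h1 : k = i
              · rw [if_pos h1, if_neg (by omega), h1, hsi]; ring
              · by_cases h2 : k = j
                · rw [if_neg h1, if_pos h2, h2, hsj]; ring
                · rw [if_neg h1, if_neg h2, hrest k hkN h1 h2]; ring
            rw [Finset.sum_congr rfl hc, Finset.sum_add_distrib,
              Finset.sum_ite_eq' (range (m.val+1)) i (fun _ => (-1:ℤ)),
              Finset.sum_ite_eq' (range (m.val+1)) j (fun _ => (1:ℤ))]
            simp only [Finset.mem_range]
            congr 1
            · split_ifs <;> first | rfl | omega
            · split_ifs <;> first | rfl | omega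
          rw [hsum]
          unfold indi
          split_ifs <;> omega
      rw [hYeq]
      apply Finset.mem_union_left
      apply Finset.mem_union_left
      refine Finset.mem_image.mpr ⟨⟨j, i⟩, ?_, rfl⟩
      refine Finset.mem_sigma.mpr ⟨?_, ?_⟩ <;> simp only [] <;> rw [Finset.mem_range] <;> omega
  · -- a = 1
    have hQ3 : FnQ n Y = -3 := by
      rcases hQ with h | h
      · exfalso
        rw [h] at hpar
        norm_num at hpar
      · exact h
    have h3 : w + (1 + qE6 f - 2*(f 0)) = 2 := by
      rw [hm] at hQ3
      linarith
    have hge : (0:ℤ) ≤ 3*(1 + qE6 f - 2*(f 0)) + 1 := by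
      nlinarith
    have hB1 : 1 + qE6 f - 2*(f 0) = 1 := by omega
    have hw1 : w = 1 := by omega
    have hqf : qE6 f = 2 * f 0 := by omega
    obtain ⟨t, htN, hst⟩ := sumsq_one (by rw [← hw_def]; exact hw1) htel
    have hYeq : Y = mkY n 1 (prei t) f := by
      funext v
      match v with
      | none => exact ha_def.symm
      | some (Sum.inr m) => rfl
      | some (Sum.inl m) =>
        show Y (some (Sum.inl m)) = prei t m.val
        rw [← Xof_val n Y m, Xof_eq_sub, ← ha_def]
        have hsum : ∑ k ∈ range (m.val+1), sof n Y k = if t ≤ m.val then (1:ℤ) else 0 := by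
          have hc : ∀ k ∈ range (m.val+1), sof n Y k = if k = t then (1:ℤ) else 0 := by
            intro k hk
            have hkm := Finset.mem_range.mp hk
            have hmlt := m.isLt
            exact hst k (by omega)
          rw [Finset.sum_congr rfl hc, Finset.sum_ite_eq' (range (m.val+1)) t (fun _ => (1:ℤ))]
          simp only [Finset.mem_range]
          split_ifs <;> first | rfl | omega
        rw [hsum]
        unfold prei
        split_ifs <;> omega
    have hbq : qE6 f ≤ 4 := by
      have hf03 : f 0 ≤ 2 := by nlinarith [qE6_b0 f, hfpos 0]
      omega
    have hfWF : f ∈ WF := by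
      apply mem_WF_of hfpos
      · nlinarith [qE6_b0 f, hfpos 0]
      · nlinarith [qE6_b1 f, hfpos 1]
      · nlinarith [qE6_b2 f, hfpos 2]
      · nlinarith [qE6_b3 f, hfpos 3]
      · nlinarith [qE6_b4 f, hfpos 4]
      · nlinarith [qE6_b5 f, hfpos 5]
      · exact hqf
    rw [hYeq]
    apply Finset.mem_union_right
    refine Finset.mem_image.mpr ⟨(t, f), ?_, rfl⟩
    rw [Finset.mem_product]
    exact ⟨Finset.mem_range.mpr (by omega), hfWF⟩

lemma pos_sound (n : ℕ) (Y : FnV n → ℤ) (hmem : Y ∈ Tpos n) :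
    Y ≠ 0 ∧ (∀ i, 0 ≤ Y i) ∧ (FnQ n Y = -2 ∨ FnQ n Y = -3) := by
  rcases Finset.mem_union.mp hmem with h12 | h3
  · rcases Finset.mem_union.mp h12 with h1 | h2
    · -- T1
      obtain ⟨p, hp, rfl⟩ := Finset.mem_image.mp h1
      obtain ⟨hp1, hp2⟩ := Finset.mem_sigma.mp hp
      have hj : p.1 ≤ n := by
        have := Finset.mem_range.mp hp1
        omega
      have hij : p.2 < p.1 := Finset.mem_range.mp hp2
      refine ⟨?_, ?_, Or.inl (FnQ_interval n hij hj)⟩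
      · intro h0
        have := congrFun h0 (some (Sum.inl ⟨p.2, by omega⟩))
        simp only [Pi.zero_apply] at this
        rw [show mkY n 0 (indi p.2 p.1) 0 (some (Sum.inl ⟨p.2, by omega⟩))
            = indi p.2 p.1 p.2 from rfl] at this
        unfold indi at this
        rw [if_pos (by omega)] at this
        exact one_ne_zero this
      · intro v
        match v with
        | none => exact le_refl 0
        | some (Sum.inl i) =>
          show (0:ℤ) ≤ indi p.2 p.1 i.val
          unfold indi
          split_ifs <;> norm_num
        | some (Sum.inr j) => exact le_refl 0
    · -- T2
      obtain ⟨f, hf, rfl⟩ := Finset.mem_image.mp h2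
      obtain ⟨hfpos, hfq⟩ := PF_spec hf
      refine ⟨?_, ?_, Or.inl (FnQ_e6 n f hfq)⟩
      · intro h0
        have hfz : f = 0 := by
          funext j
          exact congrFun h0 (some (Sum.inr j))
        rw [hfz, qE6_zero_eval] at hfq
        norm_num at hfq
      · intro v
        match v with
        | none => exact le_refl 0
        | some (Sum.inl i) => exact le_refl 0
        | some (Sum.inr j) => exact hfpos j
  · -- T3
    obtain ⟨p, hp, rfl⟩ := Finset.mem_image.mp h3
    obtain ⟨hp1, hp2⟩ := Finset.mem_product.mp hp
    have ht : p.1 ≤ n := by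
      have := Finset.mem_range.mp hp1
      omega
    obtain ⟨hfpos, hfq⟩ := WF_spec hp2
    refine ⟨?_, ?_, Or.inr (FnQ_prefix n ht p.2 hfq)⟩
    · intro h0
      have := congrFun h0 none
      simp only [Pi.zero_apply] at this
      exact one_ne_zero this
    · intro v
      match v with
      | none => exact zero_le_one
      | some (Sum.inl i) =>
        show (0:ℤ) ≤ prei p.1 i.val
        unfold prei
        split_ifs <;> norm_num
      | some (Sum.inr j) => exact hfpos j

lemma FnQ_neg (n : ℕ) (Y : FnV n → ℤ) : FnQ n (-Y) = FnQ n Y := by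
  unfold FnQ
  apply Finset.sum_congr rfl
  intro x _
  apply Finset.sum_congr rfl
  intro y _
  simp only [Pi.neg_apply]
  ring

lemma set_eq (n : ℕ) :
    {Y : FnV n → ℤ | Y ≠ 0 ∧ ((∀ i, 0 ≤ Y i) ∨ (∀ i, Y i ≤ 0)) ∧
      (FnQ n Y = -2 ∨ FnQ n Y = -3)} = ↑(Tall n) := by
  ext Y
  simp only [Set.mem_setOf_eq, Finset.coe_union, Finset.mem_coe]
  constructor
  · rintro ⟨hY, hsign, hQ⟩
    rcases hsign with hp | hn
    · exact Finset.mem_union.mpr (Or.inl (pos_classify n Y hY hp hQ))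
    · refine Finset.mem_union.mpr (Or.inr (Finset.mem_image.mpr ⟨-Y, ?_, neg_neg Y⟩))
      apply pos_classify n (-Y) (neg_ne_zero.mpr hY)
      · intro i
        simp only [Pi.neg_apply]
        exact neg_nonneg.mpr (hn i)
      · rw [FnQ_neg]
        exact hQ
  · intro h
    rcases Finset.mem_union.mp h with h | h
    · obtain ⟨h1, h2, h3⟩ := pos_sound n Y h
      exact ⟨h1, Or.inl h2, h3⟩
    · obtain ⟨Z, hZ, rfl⟩ := Finset.mem_image.mp h
      obtain ⟨h1, h2, h3⟩ := pos_sound n Z hZ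
      refine ⟨neg_ne_zero.mpr h1, Or.inr (fun i => ?_), ?_⟩
      · simp only [Pi.neg_apply]
        exact neg_nonpos.mpr (h2 i)
      · rw [FnQ_neg]
        exact h3

lemma T1_card (n : ℕ) : (T1 n).card = ∑ j ∈ range (n+1), j := by
  rw [T1, Finset.card_image_of_injOn, Finset.card_sigma]
  · congr 1
    funext j
    exact Finset.card_range j
  · rintro ⟨p1, p2⟩ hp ⟨q1, q2⟩ hq h
    obtain ⟨hp1, hp2⟩ := Finset.mem_sigma.mp hp
    obtain ⟨hq1, hq2⟩ := Finset.mem_sigma.mp hq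
    simp only [Finset.mem_range] at hp1 hp2 hq1 hq2
    have hcoord : ∀ k, k < n → indi p2 p1 k = indi q2 q1 k := by
      intro k hk
      exact congrFun h (some (Sum.inl ⟨k, hk⟩))
    have hext : ∀ i1 i2 j1 j2 : ℕ, i2 < i1 → i1 < n + 1 → j2 < j1 → j1 < n + 1 →
        (∀ k, k < n → indi i2 i1 k = indi j2 j1 k) → j2 ≤ i2 ∧ i1 ≤ j1 := by
      intro i1 i2 j1 j2 h1 h2 h3 h4 hco
      constructor
      · have e := hco i2 (by omega)
        unfold indi at e
        rw [if_pos (by omega)] at e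
        by_contra hcon
        rw [if_neg (by omega)] at e
        norm_num at e
      · have e := hco (i1 - 1) (by omega)
        unfold indi at e
        rw [if_pos (by omega)] at e
        by_contra hcon
        rw [if_neg (by omega)] at e
        norm_num at e
    have h1 := hext p1 p2 q1 q2 hp2 hp1 hq2 hq1 hcoord
    have h2 := hext q1 q2 p1 p2 hq2 hq1 hp2 hp1 (fun k hk => (hcoord k hk).symm)
    have e1 : p1 = q1 := by omega
    have e2 : p2 = q2 := by omega
    subst e1; subst e2
    rfl

lemma T2_card (n : ℕ) : (T2 n).card = 36 := by
  rw [T2, Finset.card_image_of_injOn, PF_card]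
  intro f _ g _ h
  funext j
  exact congrFun h (some (Sum.inr j))

lemma T3_card (n : ℕ) : (T3 n).card = (n+1) * 27 := by
  rw [T3, Finset.card_image_of_injOn, Finset.card_product, Finset.card_range, WF_card]
  rintro ⟨t, f⟩ hp ⟨s, g⟩ hq h
  obtain ⟨hp1, _⟩ := Finset.mem_product.mp hp
  obtain ⟨hq1, _⟩ := Finset.mem_product.mp hq
  simp only [Finset.mem_range] at hp1 hq1
  have hfg : f = g := by
    funext j
    exact congrFun h (some (Sum.inr j))
  have hts : t = s := by
    by_contra hne
    rcases Nat.lt_or_ge t s with hlt | hge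
    · have ht : t < n := by omega
      have e := congrFun h (some (Sum.inl ⟨t, ht⟩))
      have e' : prei t t = prei s t := e
      unfold prei at e'
      rw [if_neg (by omega), if_pos (by omega)] at e'
      norm_num at e'
    · have hlt : s < t := by omega
      have hs : s < n := by omega
      have e := congrFun h (some (Sum.inl ⟨s, hs⟩))
      have e' : prei t s = prei s s := e
      unfold prei at e'
      rw [if_pos (by omega), if_neg (by omega)] at e'
      norm_num at e' 
  subst hfg; subst hts
  rfl

lemma disj12 (n : ℕ) : Disjoint (T1 n) (T2 n) := by
  rw [Finset.disjoint_left]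
  intro Y h1 h2
  obtain ⟨p, hp, hYe⟩ := Finset.mem_image.mp h1
  obtain ⟨hp1, hp2⟩ := Finset.mem_sigma.mp hp
  simp only [Finset.mem_range] at hp1 hp2
  obtain ⟨f, _, hYe2⟩ := Finset.mem_image.mp h2
  have e := congrFun (hYe.trans hYe2.symm) (some (Sum.inl ⟨p.2, show p.2 < n by omega⟩))
  have e' : indi p.2 p.1 p.2 = 0 := e
  unfold indi at e'
  rw [if_pos (by omega)] at e'
  norm_num at e' 

lemma disj123 (n : ℕ) : Disjoint (T1 n ∪ T2 n) (T3 n) := by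
  rw [Finset.disjoint_left]
  intro Y h12 h3
  have h0 : Y none = 0 := by
    rcases Finset.mem_union.mp h12 with h | h
    · obtain ⟨p, _, hYe⟩ := Finset.mem_image.mp h
      rw [← hYe]; rfl
    · obtain ⟨f, _, hYe⟩ := Finset.mem_image.mp h
      rw [← hYe]; rfl
  obtain ⟨p, _, hYe⟩ := Finset.mem_image.mp h3
  rw [← hYe] at h0
  norm_num [mkY] at h0

lemma disjneg (n : ℕ) : Disjoint (Tpos n) ((Tpos n).image (fun Y => -Y)) := by
  rw [Finset.disjoint_left]
  intro Y h1 h2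
  obtain ⟨hne, hpos, _⟩ := pos_sound n Y h1
  obtain ⟨Z, hZ, hYe⟩ := Finset.mem_image.mp h2
  obtain ⟨_, hZpos, _⟩ := pos_sound n Z hZ
  apply hne
  funext v
  have e1 := hpos v
  have e2 : Y v = -(Z v) := by rw [← hYe]; rfl
  have e3 := hZpos v
  simp only [Pi.zero_apply]
  omega

theorem stmt_10 (n : ℕ) :
    {Y : FnV n → ℤ | Y ≠ 0 ∧ ((∀ i, 0 ≤ Y i) ∨ (∀ i, Y i ≤ 0)) ∧
      (FnQ n Y = -2 ∨ FnQ n Y = -3)}.ncard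
    = n ^ 2 + 55 * n + 126 := by
  rw [set_eq n, Set.ncard_coe_finset]
  have hTall : (Tall n).card = 2 * (Tpos n).card := by
    rw [Tall, Finset.card_union_of_disjoint (disjneg n),
      Finset.card_image_of_injective _ neg_injective]
    ring
  have hTpos : (Tpos n).card = (∑ j ∈ range (n+1), j) + 36 + (n+1) * 27 := by
    rw [Tpos, Finset.card_union_of_disjoint (disj123 n),
      Finset.card_union_of_disjoint (disj12 n), T1_card, T2_card, T3_card]
  have hg : (∑ j ∈ range (n+1), j) * 2 = (n+1) * n := by
    have := Finset.sum_range_id_mul_two (n+1)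
    simpa using this
  have hexp : (n+1) * n = n^2 + n := by ring
  rw [hTall, hTpos]
  linarith [hg, hexp]
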